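/- Single-report privacy of L-OSUE: let ε∞ and ε₁ be reals with 0 < ε₁ ≤ ε∞. Define p₁ = 1/2, q₁ = 1/(e^{ε∞} + 1), p₂ = (1 − e^{ε₁+ε∞})/(e^{ε₁} − e^{ε∞} − e^{ε₁+ε∞} + 1), q₂ = 1 − p₂, and set p_s = p₁·p₂ + (1 − p₁)·q₂ and q_s = q₁·p₂ + (1 − q₁)·q₂. Then p_s = 1/2, q_s = 1/(e^{ε₁} + 1), and consequently p_s·(1 − q_s)/((1 − p_s)·q_s) = e^{ε₁}. -/

import Mathlib

/-- Single-report privacy of L-OSUE: with the parameters of the L-OSUE protocol,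
`p_s = 1/2`, `q_s = 1/(e^{ε₁} + 1)`, and `p_s·(1 − q_s)/((1 − p_s)·q_s) = e^{ε₁}`. -/
theorem losue_single_report_privacy
    (εinf ε₁ : ℝ) (h0 : 0 < ε₁) (h1 : ε₁ ≤ εinf)
    (p₁ q₁ p₂ q₂ ps qs : ℝ)
    (hp₁ : p₁ = 1 / 2)
    (hq₁ : q₁ = 1 / (Real.exp εinf + 1))
    (hp₂ : p₂ = (1 - Real.exp (ε₁ + εinf))
        / (Real.exp ε₁ - Real.exp εinf - Real.exp (ε₁ + εinf) + 1))
    (hq₂ : q₂ = 1 - p₂)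
    (hps : ps = p₁ * p₂ + (1 - p₁) * q₂)
    (hqs : qs = q₁ * p₂ + (1 - q₁) * q₂) :
    ps = 1 / 2 ∧ qs = 1 / (Real.exp ε₁ + 1) ∧
    ps * (1 - qs) / ((1 - ps) * qs) = Real.exp ε₁ := by
  have ha : 1 < Real.exp ε₁ := by
    have := Real.exp_lt_exp.mpr h0
    simpa using this
  have hb : 1 < Real.exp εinf := lt_of_lt_of_le ha (Real.exp_le_exp.mpr h1)
  have hab : Real.exp (ε₁ + εinf) = Real.exp ε₁ * Real.exp εinf := Real.exp_add _ _
  have hD : Real.exp ε₁ - Real.exp εinf - Real.exp ε₁ * Real.exp εinf + 1 ≠ 0 := by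
    have : Real.exp ε₁ - Real.exp εinf - Real.exp ε₁ * Real.exp εinf + 1 < 0 := by nlinarith
    exact ne_of_lt this
  have hA : Real.exp ε₁ + 1 ≠ 0 := by positivity
  have hB : Real.exp εinf + 1 ≠ 0 := by positivity
  have hps' : ps = 1/2 := by rw [hps, hp₁, hq₂]; ring
  have hqs' : qs = 1 / (Real.exp ε₁ + 1) := by
    rw [hqs, hq₁, hq₂, hp₂, hab]
    have hD' : Real.exp ε₁ - Real.exp εinf - Real.exp εinf * Real.exp ε₁ + 1 ≠ 0 := by
      rw [mul_comm]; exact hD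
    field_simp
    ring
  refine ⟨hps', hqs', ?_⟩
  rw [hps', hqs']
  have h2 : (0:ℝ) < Real.exp ε₁ + 1 := by positivity
  field_simp
  ring
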